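/- Let c, β₁, β₂ ∈ ℝ, δ > 0, and suppose |c + σ₁ β₁ + σ₂ β₂| ≥ δ for all four sign choices σ₁, σ₂ ∈ {+1, −1}. Let M be the complex 4×4 matrix M = [[−i·c, −β₂, −β₁, 0], [β₂, −i·c, 0, −β₁], [β₁, 0, −i·c, −β₂], [0, β₁, β₂, −i·c]]. Then M is invertible and for every u ∈ ℂ⁴ one has ‖M u‖₂ ≥ δ ‖u‖₂ (equivalently, ‖M⁻¹ v‖₂ ≤ δ⁻¹ ‖v‖₂ for all v ∈ ℂ⁴), where ‖·‖₂ is the Euclidean norm on ℂ⁴. -/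

import Mathlib

set_option maxHeartbeats 1000000


open Matrix Complex

/-- Quantitative invertibility of the `4×4` Fourier block of the matrix
cohomological equation `L_ω u + Γ_{0,β} u − u Γ_{0,β} = v` under the
second Melnikov lower bound. -/
theorem second_melnikov_block_quantitative (c β₁ β₂ δ : ℝ) (hδ : 0 < δ)
    (h : ∀ σ₁ σ₂ : ℝ, (σ₁ = 1 ∨ σ₁ = -1) → (σ₂ = 1 ∨ σ₂ = -1) →
      δ ≤ |c + σ₁ * β₁ + σ₂ * β₂|)
    (M : Matrix (Fin 4) (Fin 4) ℂ)
    (hM : M = !![-(Complex.I * (c : ℂ)), -(β₂ : ℂ), -(β₁ : ℂ), 0;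
                 (β₂ : ℂ), -(Complex.I * (c : ℂ)), 0, -(β₁ : ℂ);
                 (β₁ : ℂ), 0, -(Complex.I * (c : ℂ)), -(β₂ : ℂ);
                 0, (β₁ : ℂ), (β₂ : ℂ), -(Complex.I * (c : ℂ))]) :
    IsUnit M ∧ ∀ u : EuclideanSpace ℂ (Fin 4), δ * ‖u‖ ≤ ‖Matrix.toEuclideanLin M u‖ := by
  subst hM
  -- squared Melnikov bounds
  have hl : ∀ s t : ℝ, (s = 1 ∨ s = -1) → (t = 1 ∨ t = -1) →
      δ ^ 2 ≤ (c + s * β₁ + t * β₂) ^ 2 := by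
    intro s t hs ht
    have h1 := h s t hs ht
    nlinarith [_root_.sq_abs (c + s * β₁ + t * β₂), abs_nonneg (c + s * β₁ + t * β₂)]
  have h11 := hl 1 1 (Or.inl rfl) (Or.inl rfl)
  have h1m := hl 1 (-1) (Or.inl rfl) (Or.inr rfl)
  have hm1 := hl (-1) 1 (Or.inr rfl) (Or.inl rfl)
  have hmm := hl (-1) (-1) (Or.inr rfl) (Or.inr rfl)
  simp only [one_mul, neg_one_mul] at h11 h1m hm1 hmm
  -- the main norm bound
  have key : ∀ u : EuclideanSpace ℂ (Fin 4),
      δ * ‖u‖ ≤ ‖Matrix.toEuclideanLin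
        !![-(Complex.I * (c : ℂ)), -(β₂ : ℂ), -(β₁ : ℂ), 0;
           (β₂ : ℂ), -(Complex.I * (c : ℂ)), 0, -(β₁ : ℂ);
           (β₁ : ℂ), 0, -(Complex.I * (c : ℂ)), -(β₂ : ℂ);
           0, (β₁ : ℂ), (β₂ : ℂ), -(Complex.I * (c : ℂ))] u‖ := by
    intro u
    set w := Matrix.toEuclideanLin
        !![-(Complex.I * (c : ℂ)), -(β₂ : ℂ), -(β₁ : ℂ), 0;
           (β₂ : ℂ), -(Complex.I * (c : ℂ)), 0, -(β₁ : ℂ);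
           (β₁ : ℂ), 0, -(Complex.I * (c : ℂ)), -(β₂ : ℂ);
           0, (β₁ : ℂ), (β₂ : ℂ), -(Complex.I * (c : ℂ))] u with hw
    set a := u 0 with ha
    set b := u 1 with hb
    set e := u 2 with he
    set d := u 3 with hd
    have hw0 : w 0 = -(Complex.I * c) * a - β₂ * b - β₁ * e := by
      rw [hw]
      simp [Matrix.toEuclideanLin_apply, Matrix.mulVec, dotProduct,
        Fin.sum_univ_four, ha, hb, he, hd]
      ring
    have hw1 : w 1 = β₂ * a - Complex.I * c * b - β₁ * d := by
      rw [hw]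
      simp [Matrix.toEuclideanLin_apply, Matrix.mulVec, dotProduct,
        Fin.sum_univ_four, ha, hb, he, hd]
      ring
    have hw2 : w 2 = β₁ * a - Complex.I * c * e - β₂ * d := by
      rw [hw]
      simp [Matrix.toEuclideanLin_apply, Matrix.mulVec, dotProduct,
        Fin.sum_univ_four, ha, hb, he, hd]
      ring
    have hw3 : w 3 = β₁ * b + β₂ * e - Complex.I * c * d := by
      rw [hw]
      simp [Matrix.toEuclideanLin_apply, Matrix.mulVec, dotProduct,
        Fin.sum_univ_four, ha, hb, he, hd]
      ring
    -- eigen-coordinates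
    set z1 := a - Complex.I * b - Complex.I * e - d with hz1
    set z2 := a + Complex.I * b - Complex.I * e + d with hz2
    set z3 := a - Complex.I * b + Complex.I * e + d with hz3
    set z4 := a + Complex.I * b + Complex.I * e - d with hz4
    have id1 : normSq z1 + normSq z2 + normSq z3 + normSq z4 =
        4 * (normSq a + normSq b + normSq e + normSq d) := by
      simp only [hz1, hz2, hz3, hz4, Complex.normSq_apply, Complex.add_re, Complex.add_im,
        Complex.sub_re, Complex.sub_im, Complex.mul_re, Complex.mul_im,
        Complex.I_re, Complex.I_im]
      ring
    have id2 : (c + β₁ + β₂) ^ 2 * normSq z1 + (c + β₁ - β₂) ^ 2 * normSq z2 +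
        (c - β₁ + β₂) ^ 2 * normSq z3 + (c - β₁ - β₂) ^ 2 * normSq z4 =
        4 * (normSq (w 0) + normSq (w 1) + normSq (w 2) + normSq (w 3)) := by
      rw [hw0, hw1, hw2, hw3]
      simp only [hz1, hz2, hz3, hz4, Complex.normSq_apply, Complex.add_re, Complex.add_im,
        Complex.sub_re, Complex.sub_im, Complex.neg_re, Complex.neg_im,
        Complex.mul_re, Complex.mul_im, Complex.I_re, Complex.I_im,
        Complex.ofReal_re, Complex.ofReal_im]
      ring
    have hS : ‖u‖ ^ 2 = normSq a + normSq b + normSq e + normSq d := by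
      rw [EuclideanSpace.norm_eq, Real.sq_sqrt (by positivity)]
      simp [Fin.sum_univ_four, Complex.sq_norm, ha, hb, he, hd]
    have hT : ‖w‖ ^ 2 = normSq (w 0) + normSq (w 1) + normSq (w 2) + normSq (w 3) := by
      rw [EuclideanSpace.norm_eq, Real.sq_sqrt (by positivity)]
      simp [Fin.sum_univ_four, Complex.sq_norm]
    have hN1 := Complex.normSq_nonneg z1
    have hN2 := Complex.normSq_nonneg z2
    have hN3 := Complex.normSq_nonneg z3
    have hN4 := Complex.normSq_nonneg z4
    have hsq : (δ * ‖u‖) ^ 2 ≤ ‖w‖ ^ 2 := by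
      rw [mul_pow, hS, hT]
      nlinarith [mul_le_mul_of_nonneg_right h11 hN1, mul_le_mul_of_nonneg_right h1m hN2,
        mul_le_mul_of_nonneg_right hm1 hN3, mul_le_mul_of_nonneg_right hmm hN4]
    nlinarith [norm_nonneg w, norm_nonneg u, mul_nonneg hδ.le (norm_nonneg u)]
  refine ⟨?_, key⟩
  -- invertibility from the lower bound
  rw [Matrix.isUnit_iff_isUnit_det, isUnit_iff_ne_zero]
  intro hdet
  obtain ⟨v, hv, hmv⟩ := (Matrix.exists_mulVec_eq_zero_iff).2 hdet
  have hkey := key ((WithLp.equiv 2 (Fin 4 → ℂ)).symm v)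
  rw [show Matrix.toEuclideanLin _ ((WithLp.equiv 2 (Fin 4 → ℂ)).symm v) =
      (WithLp.equiv 2 (Fin 4 → ℂ)).symm (_ *ᵥ v) from rfl, hmv] at hkey
  have h00 : ((WithLp.equiv 2 (Fin 4 → ℂ)).symm (0 : Fin 4 → ℂ)) = 0 := rfl
  rw [h00, norm_zero] at hkey
  have hvn : ‖(WithLp.equiv 2 (Fin 4 → ℂ)).symm v‖ ≠ 0 := by
    rw [norm_ne_zero_iff]
    intro h0
    exact hv (by simpa using congrArg (WithLp.equiv 2 (Fin 4 → ℂ)) h0)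
  have : 0 < δ * ‖(WithLp.equiv 2 (Fin 4 → ℂ)).symm v‖ := by
    have := (norm_nonneg ((WithLp.equiv 2 (Fin 4 → ℂ)).symm v)).lt_of_ne' hvn
    positivity
  linarith
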